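/- For any octonion o and any two orthogonal octonions x and y, one has (o * conj(y)) * x = -(o * conj(x)) * y, where conj denotes octonion conjugation and orthogonality is with respect to the standard inner product on the octonions. -/

import Mathlib

open Quaternion

def Octonion : Type := ℍ[ℝ] × ℍ[ℝ]

noncomputable instance : AddCommGroup Octonion := inferInstanceAs (AddCommGroup (ℍ[ℝ] × ℍ[ℝ]))
noncomputable instance : Module ℝ Octonion := inferInstanceAs (Module ℝ (ℍ[ℝ] × ℍ[ℝ]))

/-- Cayley–Dickson multiplication on pairs of quaternions. -/
noncomputable instance : Mul Octonion :=
  ⟨fun x y =>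
    ((x : ℍ[ℝ] × ℍ[ℝ]).1 * (y : ℍ[ℝ] × ℍ[ℝ]).1 -
        star (y : ℍ[ℝ] × ℍ[ℝ]).2 * (x : ℍ[ℝ] × ℍ[ℝ]).2,
      (y : ℍ[ℝ] × ℍ[ℝ]).2 * (x : ℍ[ℝ] × ℍ[ℝ]).1 +
        (x : ℍ[ℝ] × ℍ[ℝ]).2 * star (y : ℍ[ℝ] × ℍ[ℝ]).1)⟩

/-- Octonion conjugation. -/
noncomputable def Octonion.conj (x : Octonion) : Octonion :=
  ((star (x : ℍ[ℝ] × ℍ[ℝ]).1, -(x : ℍ[ℝ] × ℍ[ℝ]).2) : ℍ[ℝ] × ℍ[ℝ])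

/-- The real part of an octonion. -/
noncomputable def Octonion.re (x : Octonion) : ℝ := (x : ℍ[ℝ] × ℍ[ℝ]).1.re

/-- The standard inner product `⟨x,y⟩ = (1/2) Re (x * conj y + y * conj x)`. -/
noncomputable def Octonion.inner (x y : Octonion) : ℝ :=
  Octonion.re (x * Octonion.conj y + y * Octonion.conj x) / 2

/-- The Euclidean norm of an octonion. -/
noncomputable def Octonion.norm (x : Octonion) : ℝ := Real.sqrt (Octonion.inner x x)


private lemma oct_mul_def (x y : Octonion) :
    x * y = (((x : ℍ[ℝ] × ℍ[ℝ]).1 * (y : ℍ[ℝ] × ℍ[ℝ]).1 -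
        star (y : ℍ[ℝ] × ℍ[ℝ]).2 * (x : ℍ[ℝ] × ℍ[ℝ]).2,
      (y : ℍ[ℝ] × ℍ[ℝ]).2 * (x : ℍ[ℝ] × ℍ[ℝ]).1 +
        (x : ℍ[ℝ] × ℍ[ℝ]).2 * star (y : ℍ[ℝ] × ℍ[ℝ]).1) : ℍ[ℝ] × ℍ[ℝ]) := rfl


private lemma oct_add_def (x y : Octonion) :
    x + y = ((((x : ℍ[ℝ] × ℍ[ℝ]).1 + (y : ℍ[ℝ] × ℍ[ℝ]).1, (x : ℍ[ℝ] × ℍ[ℝ]).2 + (y : ℍ[ℝ] × ℍ[ℝ]).2)) : ℍ[ℝ] × ℍ[ℝ]) := rfl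

private lemma oct_neg_def (x : Octonion) :
    -x = (((-(x : ℍ[ℝ] × ℍ[ℝ]).1, -(x : ℍ[ℝ] × ℍ[ℝ]).2)) : ℍ[ℝ] × ℍ[ℝ]) := rfl

private lemma oct_mul_def' (x y : ℍ[ℝ] × ℍ[ℝ]) :
    (@HMul.hMul Octonion Octonion Octonion _ x y : ℍ[ℝ] × ℍ[ℝ]) =
      (x.1 * y.1 - star y.2 * x.2, y.2 * x.1 + x.2 * star y.1) := rfl

private lemma oct_add_def' (x y : ℍ[ℝ] × ℍ[ℝ]) :
    (@HAdd.hAdd Octonion Octonion Octonion _ x y : ℍ[ℝ] × ℍ[ℝ]) = (x.1 + y.1, x.2 + y.2) := rfl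

private lemma oct_neg_def' (x : ℍ[ℝ] × ℍ[ℝ]) :
    (@Neg.neg Octonion _ x : ℍ[ℝ] × ℍ[ℝ]) = (-x.1, -x.2) := rfl

set_option maxHeartbeats 4000000 in
/-- For any octonion `o` and any two orthogonal octonions `x, y`,
`(o * conj y) * x = -((o * conj x) * y)`. -/
theorem octonion_conj_mul_orthogonal (o x y : Octonion)
    (h : Octonion.inner x y = 0) :
    (o * Octonion.conj y) * x = -((o * Octonion.conj x) * y) := by
  obtain ⟨a, b⟩ := x
  obtain ⟨c, d⟩ := y
  obtain ⟨p, q⟩ := o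
  simp only [Octonion.inner, Octonion.re, Octonion.conj, oct_mul_def, oct_add_def, oct_neg_def,
    oct_mul_def', oct_add_def', oct_neg_def', Prod.mk.injEq] at h ⊢
  simp only [Quaternion.re_mul, Quaternion.imI_mul, Quaternion.imJ_mul, Quaternion.imK_mul,
    Quaternion.re_add, Quaternion.re_sub, Quaternion.re_neg, Quaternion.re_star,
    Quaternion.imI_add, Quaternion.imI_sub, Quaternion.imI_neg, Quaternion.imI_star,
    Quaternion.imJ_add, Quaternion.imJ_sub, Quaternion.imJ_neg, Quaternion.imJ_star,
    Quaternion.imK_add, Quaternion.imK_sub, Quaternion.imK_neg, Quaternion.imK_star] at h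
  refine Prod.ext ?_ ?_ <;> apply Quaternion.ext <;>
    simp only [Quaternion.re_mul, Quaternion.imI_mul, Quaternion.imJ_mul, Quaternion.imK_mul,
      Quaternion.re_add, Quaternion.re_sub, Quaternion.re_neg, Quaternion.re_star,
      Quaternion.imI_add, Quaternion.imI_sub, Quaternion.imI_neg, Quaternion.imI_star,
      Quaternion.imJ_add, Quaternion.imJ_sub, Quaternion.imJ_neg, Quaternion.imJ_star,
      Quaternion.imK_add, Quaternion.imK_sub, Quaternion.imK_neg, Quaternion.imK_star] <;>
    first
      | linear_combination (2 * p.re) * h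
      | linear_combination (-2 * p.re) * h
      | linear_combination (2 * p.imI) * h
      | linear_combination (-2 * p.imI) * h
      | linear_combination (2 * p.imJ) * h
      | linear_combination (-2 * p.imJ) * h
      | linear_combination (2 * p.imK) * h
      | linear_combination (-2 * p.imK) * h
      | linear_combination (2 * q.re) * h
      | linear_combination (-2 * q.re) * h
      | linear_combination (2 * q.imI) * h
      | linear_combination (-2 * q.imI) * h
      | linear_combination (2 * q.imJ) * h
      | linear_combination (-2 * q.imJ) * h
      | linear_combination (2 * q.imK) * h
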